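/- Let α be a real with 0 < α < 1, M = 1, and let n ≥ 1 be an integer, t ≥ 0 a real and x ∈ ℤ. Then (1/(2πi))² ∮ dv ∮ dz [(1+2z)(2v+2−α)/((z−v)(z+v+1))] (1+z)^{x+2n−2} e^{−t(z+1)} (z(1+z))^{−(n−1)} ((v+1)(v+1−α))^{−1}, where the v-contour encloses exactly α−1 and for each v the z-contour encloses exactly 0 and v, equals (1/(2πi))∮ dv (1+v)^{x+n−1} e^{−t(v+1)} v^{−(n−1)} (1+2v)/((v+1−α)(v+α)), where the contour encloses exactly the points 0 and α−1 (and in particular neither −1 nor −α). -/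

import Mathlib

open Complex Real MeasureTheory

noncomputable section

/-- Integrand of the double contour integral (`M = 1`, `j = 1` case of `Φ^{n,t}_{n-1}(x)`). -/
def phiInt (α : ℝ) (n : ℕ) (t : ℝ) (x : ℤ) (v z : ℂ) : ℂ :=
  (1 + 2 * z) * (2 * v + 2 - (α : ℂ)) / ((z - v) * (z + v + 1)) *
    (1 + z) ^ (x + 2 * (n : ℤ) - 2) * Complex.exp (-((t : ℂ) * (z + 1))) *
    (z * (1 + z)) ^ (-((n : ℤ) - 1)) * ((v + 1) * (v + 1 - (α : ℂ)))⁻¹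

/-- Integrand of the single contour integral on the right-hand side. -/
def singleInt (α : ℝ) (n : ℕ) (t : ℝ) (x : ℤ) (v : ℂ) : ℂ :=
  (1 + v) ^ (x + (n : ℤ) - 1) * Complex.exp (-((t : ℂ) * (v + 1))) *
    v ^ (-((n : ℤ) - 1)) * (1 + 2 * v) / ((v + 1 - (α : ℂ)) * (v + (α : ℂ)))

/-! ### Auxiliary definitions -/

private def Kfun (α t : ℝ) (n : ℕ) (x : ℤ) (v : ℂ) : ℂ :=
  (2 * v + 2 - (α : ℂ)) * (1 + v) ^ (x + 2 * (n : ℤ) - 2) * Complex.exp (-((t : ℂ) * (v + 1))) *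
    (v * (1 + v)) ^ (-((n : ℤ) - 1)) * (v + 1)⁻¹

private def Ffun (α t : ℝ) (n : ℕ) (x : ℤ) (v : ℂ) : ℂ :=
  (v - ((α : ℂ) - 1))⁻¹ * Kfun α t n x v

private def Hfun (α t : ℝ) (n : ℕ) (x : ℤ) (z v : ℂ) : ℂ :=
  (1 + 2 * z) * (2 * v + 2 - (α : ℂ)) / ((z - v) * (z + v + 1)) *
    (1 + z) ^ (x + 2 * (n : ℤ) - 2) * Complex.exp (-((t : ℂ) * (z + 1))) *
    (z * (1 + z)) ^ (-((n : ℤ) - 1)) * (v + 1)⁻¹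

private def Gzfun (α t : ℝ) (n : ℕ) (x : ℤ) (v z : ℂ) : ℂ :=
  (1 + 2 * z) * (2 * v + 2 - (α : ℂ)) / (z + v + 1) *
    (1 + z) ^ (x + 2 * (n : ℤ) - 2) * Complex.exp (-((t : ℂ) * (z + 1))) *
    (z * (1 + z)) ^ (-((n : ℤ) - 1)) * ((v + 1) * (v + 1 - (α : ℂ)))⁻¹

private def Lfun (α t : ℝ) (n : ℕ) (x : ℤ) (v : ℂ) : ℂ :=
  (1 + v) ^ (x + (n : ℤ) - 1) * Complex.exp (-((t : ℂ) * (v + 1))) *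
    v ^ (-((n : ℤ) - 1)) * (1 + 2 * v) * (v + (α : ℂ))⁻¹

private def Rval (α t : ℝ) (n : ℕ) (x : ℤ) : ℂ :=
  (α : ℂ) ^ (x + (n : ℤ) - 1) * ((α : ℂ) - 1) ^ (-((n : ℤ) - 1)) *
    Complex.exp (-((t : ℂ) * (α : ℂ)))

/-! ### Generic integral helpers -/

private lemma circleIntegral_add' {f g : ℂ → ℂ} {c : ℂ} {R : ℝ}
    (hf : CircleIntegrable f c R) (hg : CircleIntegrable g c R) :
    (∮ z in C(c, R), (f z + g z)) = (∮ z in C(c, R), f z) + ∮ z in C(c, R), g z := by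
  simp only [circleIntegral, smul_add, intervalIntegral.integral_add hf.out hg.out]

private lemma cauchy_pole {G H : ℂ → ℂ} {c w : ℂ} {R : ℝ} (hR : 0 < R) (hw : w ∈ Metric.ball c R)
    (heq : Set.EqOn G (fun u => (u - w)⁻¹ * H u) (Metric.sphere c R))
    (hH : DifferentiableOn ℂ H (Metric.closedBall c R)) :
    (∮ u in C(c, R), G u) = (2 * (π : ℂ) * I) * H w := by
  rw [circleIntegral.integral_congr hR.le heq]
  have h2 := ((hH.mono Metric.closure_ball_subset_closedBall).diffContOnCl).circleIntegral_sub_inv_smul hw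
  simpa [smul_eq_mul] using h2

private lemma circleIntegral_swap (f : ℂ → ℂ → ℂ) (c₁ c₂ : ℂ) (R₁ R₂ : ℝ) (h₁ : 0 ≤ R₁)
    (h₂ : 0 ≤ R₂)
    (hf : ContinuousOn (fun p : ℂ × ℂ => f p.1 p.2) (Metric.sphere c₁ R₁ ×ˢ Metric.sphere c₂ R₂)) :
    (∮ v in C(c₁, R₁), ∮ z in C(c₂, R₂), f v z)
      = ∮ z in C(c₂, R₂), ∮ v in C(c₁, R₁), f v z := by
  have hg : Continuous fun p : ℝ × ℝ =>
      deriv (circleMap c₁ R₁) p.1 * (deriv (circleMap c₂ R₂) p.2 *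
        f (circleMap c₁ R₁ p.1) (circleMap c₂ R₂ p.2)) := by
    simp only [deriv_circleMap]
    refine (((continuous_circleMap 0 R₁).comp continuous_fst).mul continuous_const).mul ?_
    refine (((continuous_circleMap 0 R₂).comp continuous_snd).mul continuous_const).mul ?_
    exact hf.comp_continuous
      ((((continuous_circleMap _ _).comp continuous_fst)).prodMk
        ((continuous_circleMap _ _).comp continuous_snd))
      fun p => ⟨circleMap_mem_sphere _ h₁ _, circleMap_mem_sphere _ h₂ _⟩
  have hint : Integrable (fun p : ℝ × ℝ =>
      deriv (circleMap c₁ R₁) p.1 * (deriv (circleMap c₂ R₂) p.2 *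
        f (circleMap c₁ R₁ p.1) (circleMap c₂ R₂ p.2)))
      ((volume.restrict (Set.Ioc (0:ℝ) (2*π))).prod (volume.restrict (Set.Ioc (0:ℝ) (2*π)))) := by
    rw [Measure.prod_restrict, ← Measure.volume_eq_prod]
    exact (hg.continuousOn.integrableOn_compact (isCompact_Icc.prod isCompact_Icc)).mono_set
      (Set.prod_mono Set.Ioc_subset_Icc_self Set.Ioc_subset_Icc_self)
  have key := MeasureTheory.integral_integral_swap (f := fun θ φ =>
      deriv (circleMap c₁ R₁) θ * (deriv (circleMap c₂ R₂) φ *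
        f (circleMap c₁ R₁ θ) (circleMap c₂ R₂ φ))) hint
  simp only [circleIntegral, smul_eq_mul, intervalIntegral.integral_of_le Real.two_pi_pos.le,
    ← MeasureTheory.integral_const_mul]
  rw [key]
  congr 1
  ext φ
  refine MeasureTheory.integral_congr_ae (Filter.Eventually.of_forall fun θ => ?_)
  simp only []
  ring

private lemma circleIntegral_param_cont (f : ℂ → ℂ → ℂ) (c₁ c₂ : ℂ) (R₁ R₂ : ℝ) (h₁ : 0 ≤ R₁)
    (h₂ : 0 ≤ R₂)
    (hf : ContinuousOn (fun p : ℂ × ℂ => f p.1 p.2) (Metric.sphere c₁ R₁ ×ˢ Metric.sphere c₂ R₂)) :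
    Continuous fun θ : ℝ => (∮ z in C(c₂, R₂), f (circleMap c₁ R₁ θ) z) := by
  have huncurry : Continuous (Function.uncurry fun θ φ : ℝ =>
      deriv (circleMap c₂ R₂) φ • f (circleMap c₁ R₁ θ) (circleMap c₂ R₂ φ)) := by
    unfold Function.uncurry
    simp only [deriv_circleMap]
    refine (((continuous_circleMap 0 R₂).comp continuous_snd).mul continuous_const).smul ?_
    exact hf.comp_continuous
      (((continuous_circleMap _ _).comp continuous_fst).prodMk
        ((continuous_circleMap _ _).comp continuous_snd))
      fun p => ⟨circleMap_mem_sphere _ h₁ _, circleMap_mem_sphere _ h₂ _⟩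
  have h := intervalIntegral.continuous_parametric_intervalIntegral_of_continuous'
    (f := fun θ φ => deriv (circleMap c₂ R₂) φ • f (circleMap c₁ R₁ θ) (circleMap c₂ R₂ φ))
    (μ := volume) huncurry 0 (2*π)
  simpa only [circleIntegral] using h

/-! ### Algebraic identities -/

private lemma phi_eq_pole_z (α : ℝ) (n : ℕ) (t : ℝ) (x : ℤ) (v z : ℂ) :
    phiInt α n t x v z = (z - v)⁻¹ * Gzfun α t n x v z := by
  simp only [phiInt, Gzfun, div_eq_mul_inv, mul_inv]
  ring

private lemma phi_eq_pole_v (α : ℝ) (n : ℕ) (t : ℝ) (x : ℤ) (v z : ℂ) :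
    phiInt α n t x v z = (v - ((α : ℂ) - 1))⁻¹ * Hfun α t n x z v := by
  simp only [phiInt, Hfun, div_eq_mul_inv, mul_inv]
  rw [show v - ((α : ℂ) - 1) = v + 1 - (α : ℂ) by ring]
  ring

private lemma singleInt_eq_pole (α : ℝ) (n : ℕ) (t : ℝ) (x : ℤ) (v : ℂ) :
    singleInt α n t x v = (v - ((α : ℂ) - 1))⁻¹ * Lfun α t n x v := by
  simp only [singleInt, Lfun, div_eq_mul_inv, mul_inv]
  rw [show v - ((α : ℂ) - 1) = v + 1 - (α : ℂ) by ring]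
  ring

private lemma Gz_diag (α : ℝ) (n : ℕ) (t : ℝ) (x : ℤ) {v : ℂ} (h2v : v + v + 1 ≠ 0) :
    Gzfun α t n x v v = Ffun α t n x v := by
  simp only [Gzfun, Ffun, Kfun]
  rw [show (1 : ℂ) + 2 * v = v + v + 1 by ring, mul_comm (v + v + 1) (2 * v + 2 - (α : ℂ)),
    mul_div_assoc, div_self h2v, mul_one,
    show v - ((α : ℂ) - 1) = v + 1 - (α : ℂ) by ring, mul_inv]
  ring

private lemma Kc_eq (α t : ℝ) (n : ℕ) (x : ℤ) (ha0 : (α : ℂ) ≠ 0) (ha1 : (α : ℂ) - 1 ≠ 0) :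
    Kfun α t n x ((α : ℂ) - 1) = Rval α t n x := by
  have hQ : ((α : ℂ)) ^ ((n : ℤ) - 1) ≠ 0 := zpow_ne_zero _ ha0
  have hQ1 : ((α : ℂ) - 1) ^ ((n : ℤ) - 1) ≠ 0 := zpow_ne_zero _ ha1
  simp only [Kfun, Rval]
  rw [show 2 * ((α : ℂ) - 1) + 2 - (α : ℂ) = (α : ℂ) by ring,
    show (1 : ℂ) + ((α : ℂ) - 1) = (α : ℂ) by ring,
    show ((α : ℂ) - 1) + 1 = (α : ℂ) by ring,
    show x + 2 * (n : ℤ) - 2 = (x + (n : ℤ) - 1) + ((n : ℤ) - 1) by ring,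
    zpow_add₀ ha0, mul_zpow, zpow_neg, zpow_neg]
  field_simp

private lemma Hc_eq (α t : ℝ) (n : ℕ) (x : ℤ) {z : ℂ} (ha0 : (α : ℂ) ≠ 0)
    (hz0 : z ≠ 0) (hz1 : 1 + z ≠ 0) (hzc : z + 1 - (α : ℂ) ≠ 0) (hza : z + (α : ℂ) ≠ 0) :
    Hfun α t n x z ((α : ℂ) - 1) = singleInt α n t x z := by
  have hQ : (1 + z) ^ ((n : ℤ) - 1) ≠ 0 := zpow_ne_zero _ hz1
  simp only [Hfun, singleInt]
  rw [show 2 * ((α : ℂ) - 1) + 2 - (α : ℂ) = (α : ℂ) by ring,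
    show z - ((α : ℂ) - 1) = z + 1 - (α : ℂ) by ring,
    show z + ((α : ℂ) - 1) + 1 = z + (α : ℂ) by ring,
    show ((α : ℂ) - 1) + 1 = (α : ℂ) by ring,
    show x + 2 * (n : ℤ) - 2 = (x + (n : ℤ) - 1) + ((n : ℤ) - 1) by ring,
    zpow_add₀ hz1, mul_zpow, zpow_neg, zpow_neg]
  have hZ : z ^ ((n : ℤ) - 1) ≠ 0 := zpow_ne_zero _ hz0
  generalize hP2 : (1 + z) ^ (x + (n : ℤ) - 1) = P
  generalize hQ2 : (1 + z) ^ ((n : ℤ) - 1) = Q at hQ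
  generalize hZ2 : z ^ ((n : ℤ) - 1) = Z at hZ
  field_simp

private lemma Lc_eq (α t : ℝ) (n : ℕ) (x : ℤ) (ha2 : 2 * (α : ℂ) - 1 ≠ 0) :
    Lfun α t n x ((α : ℂ) - 1) = Rval α t n x := by
  simp only [Lfun, Rval]
  rw [show (1 : ℂ) + ((α : ℂ) - 1) = (α : ℂ) by ring,
    show ((α : ℂ) - 1) + 1 = (α : ℂ) by ring,
    show (1 : ℂ) + 2 * ((α : ℂ) - 1) = 2 * (α : ℂ) - 1 by ring,
    show ((α : ℂ) - 1) + (α : ℂ) = 2 * (α : ℂ) - 1 by ring,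
    mul_assoc _ (2 * (α : ℂ) - 1), mul_inv_cancel₀ ha2, mul_one]
  ring


set_option maxHeartbeats 1000000

open Metric

/-- For `M = 1` the double contour integral `Φ^{n,t}_{n-1}(x)` (the `v`-contour enclosing
exactly `α-1`, the `z`-contour enclosing exactly `0` and `v`) reduces to a single contour
integral over a contour enclosing exactly `0` and `α-1` (and neither `-1` nor `-α`). -/
theorem phi_M_one_single_integral
    (α : ℝ) (hα0 : 0 < α) (hα1 : α < 1) (n : ℕ) (hn : 1 ≤ n)
    (t : ℝ) (ht : 0 ≤ t) (x : ℤ) :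
    ∃ ε > 0, ∀ rv rz r : ℝ,
      0 < rz → rz < rv → rv < ε → 0 < r → r < ε → r < |2 * α - 1| →
      ((2 * (π : ℂ) * I)⁻¹ * ∮ v in C((α : ℂ) - 1, rv),
          (2 * (π : ℂ) * I)⁻¹ *
            ((∮ z in C((0 : ℂ), rz), phiInt α n t x v z) +
             (∮ z in C(v, rz), phiInt α n t x v z))) =
      (2 * (π : ℂ) * I)⁻¹ *
        ((∮ v in C((0 : ℂ), r), singleInt α n t x v) +
         (∮ v in C((α : ℂ) - 1, r), singleInt α n t x v)) := by
  by_cases hhalf : α = 1 / 2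
  · refine ⟨1, one_pos, ?_⟩
    intro rv rz r hrz0 hrzrv hrvε hr0 hrε hrδ
    exfalso
    rw [hhalf] at hrδ
    norm_num at hrδ
    linarith
  -- main case
  have hδpos : 0 < |2 * α - 1| := abs_pos.mpr (by intro h; apply hhalf; linarith)
  set ε := min (min α (1 - α)) |2 * α - 1| / 4 with hεdef
  have hmin : (0:ℝ) < min (min α (1 - α)) |2 * α - 1| :=
    lt_min (lt_min hα0 (by linarith)) hδpos
  have hε0 : 0 < ε := by rw [hεdef]; linarith
  have hεa : 4 * ε ≤ α := by
    have h1 := min_le_left (min α (1 - α)) |2 * α - 1|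
    have h2 := min_le_left α (1 - α)
    rw [hεdef]; linarith
  have hεb : 4 * ε ≤ 1 - α := by
    have h1 := min_le_left (min α (1 - α)) |2 * α - 1|
    have h2 := min_le_right α (1 - α)
    rw [hεdef]; linarith
  have hεd : 4 * ε ≤ |2 * α - 1| := by
    have h1 := min_le_right (min α (1 - α)) |2 * α - 1|
    rw [hεdef]; linarith
  refine ⟨ε, hε0, ?_⟩
  intro rv rz r hrz0 hrzrv hrvε hr0 hrε hrδ
  have hrv0 : 0 < rv := lt_trans hrz0 hrzrv
  have hrzε : rz < ε := lt_trans hrzrv hrvε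
  have h2pi : (2 * (π : ℂ) * I) ≠ 0 := by
    simp [Real.pi_ne_zero, I_ne_zero, Complex.ofReal_ne_zero]
  have ha0 : (α : ℂ) ≠ 0 := Complex.ofReal_ne_zero.mpr hα0.ne'
  have ha1 : (α : ℂ) - 1 ≠ 0 := by
    intro h
    have : (α : ℂ) = ((1:ℝ):ℂ) := by push_cast; linear_combination h
    exact absurd (Complex.ofReal_inj.mp this) (by linarith)
  have ha2 : 2 * (α : ℂ) - 1 ≠ 0 := by
    intro h
    have : ((2*α : ℝ):ℂ) = ((1:ℝ):ℂ) := by push_cast; linear_combination h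
    have := Complex.ofReal_inj.mp this
    apply hhalf; linarith
  have hca : ‖((α : ℂ) - 1)‖ = 1 - α := by
    rw [show ((α : ℂ) - 1) = ((α - 1 : ℝ) : ℂ) by push_cast; ring, Complex.norm_real,
      Real.norm_eq_abs, abs_of_neg (by linarith : α - 1 < 0)]
    ring
  have tri : ∀ u w : ℂ, ‖u‖ - ‖w‖ ≤ ‖w + u‖ := by
    intro u w
    have h := norm_sub_norm_le u (-w)
    simpa [sub_neg_eq_add, add_comm] using h
  -- nonvanishing facts
  have G1 : ∀ ρ : ℝ, ρ < ε → ∀ w ∈ closedBall ((α:ℂ)-1) ρ, w ≠ 0 := by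
    intro ρ hρ w hw h0
    have hb : ‖w - ((α:ℂ)-1)‖ ≤ ρ := mem_closedBall_iff_norm.mp hw
    rw [h0, zero_sub, norm_neg, hca] at hb
    linarith
  have G2 : ∀ ρ : ℝ, ρ < ε → ∀ w ∈ closedBall ((α:ℂ)-1) ρ, 1 + w ≠ 0 := by
    intro ρ hρ w hw h0
    have hb : ‖w - ((α:ℂ)-1)‖ ≤ ρ := mem_closedBall_iff_norm.mp hw
    have hw1 : w = -1 := by linear_combination h0
    rw [hw1, show (-1 : ℂ) - ((α:ℂ)-1) = ((-α : ℝ):ℂ) by push_cast; ring,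
      Complex.norm_real, Real.norm_eq_abs, abs_neg, abs_of_pos hα0] at hb
    linarith
  have G3 : ∀ ρ : ℝ, ρ < ε → ∀ w ∈ closedBall ((α:ℂ)-1) ρ, w + w + 1 ≠ 0 := by
    intro ρ hρ w hw h0
    have hb : ‖w - ((α:ℂ)-1)‖ ≤ ρ := mem_closedBall_iff_norm.mp hw
    have hw1 : w - ((α:ℂ)-1) = (((1-2*α)/2 : ℝ):ℂ) := by push_cast; linear_combination h0/2
    rw [hw1, Complex.norm_real, Real.norm_eq_abs] at hb
    have habs : |(1-2*α)/2| = |2*α-1|/2 := by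
      rw [abs_div, abs_sub_comm 1 (2*α)]; norm_num
    rw [habs] at hb
    linarith
  have G4 : ∀ v ∈ sphere ((α:ℂ)-1) rv, ∀ w ∈ closedBall v rz, w ≠ 0 := by
    intro v hv w hw h0
    have hv' : ‖v - ((α:ℂ)-1)‖ = rv := mem_sphere_iff_norm.mp hv
    have hw' : ‖w - v‖ ≤ rz := mem_closedBall_iff_norm.mp hw
    rw [h0, zero_sub, norm_neg] at hw'
    have h1 := tri ((α:ℂ)-1) (v - ((α:ℂ)-1))
    rw [show (v - ((α:ℂ)-1)) + ((α:ℂ)-1) = v by ring, hca, hv'] at h1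
    linarith
  have G5 : ∀ v ∈ sphere ((α:ℂ)-1) rv, ∀ w ∈ closedBall v rz, 1 + w ≠ 0 := by
    intro v hv w hw h0
    have hv' : ‖v - ((α:ℂ)-1)‖ = rv := mem_sphere_iff_norm.mp hv
    have hw' : ‖w - v‖ ≤ rz := mem_closedBall_iff_norm.mp hw
    have hw1 : w = -1 := by linear_combination h0
    rw [hw1, show (-1:ℂ) - v = -(v+1) by ring, norm_neg] at hw'
    have h1 := tri (((α:ℝ)):ℂ) (v - ((α:ℂ)-1))
    rw [show (v - ((α:ℂ)-1)) + ((α:ℝ):ℂ) = v + 1 by push_cast; ring,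
      Complex.norm_real, Real.norm_eq_abs, abs_of_pos hα0, hv'] at h1
    linarith
  have G6 : ∀ v ∈ sphere ((α:ℂ)-1) rv, ∀ w ∈ closedBall v rz, w + v + 1 ≠ 0 := by
    intro v hv w hw h0
    have hv' : ‖v - ((α:ℂ)-1)‖ = rv := mem_sphere_iff_norm.mp hv
    have hw' : ‖w - v‖ ≤ rz := mem_closedBall_iff_norm.mp hw
    have hw1 : w = -v - 1 := by linear_combination h0
    rw [hw1, show (-v - 1) - v =
      -((v - ((α:ℂ)-1)) + (v - ((α:ℂ)-1)) + ((2*α-1 : ℝ):ℂ)) by push_cast; ring,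
      norm_neg] at hw'
    have h1 := tri (((2*α-1 : ℝ)):ℂ) ((v - ((α:ℂ)-1)) + (v - ((α:ℂ)-1)))
    have h2 : ‖(v - ((α:ℂ)-1)) + (v - ((α:ℂ)-1))‖ ≤ rv + rv := by
      calc ‖(v - ((α:ℂ)-1)) + (v - ((α:ℂ)-1))‖ ≤ ‖v - ((α:ℂ)-1)‖ + ‖v - ((α:ℂ)-1)‖ :=
            norm_add_le _ _
        _ = rv + rv := by rw [hv']
    rw [Complex.norm_real, Real.norm_eq_abs] at h1
    linarith
  have G7 : ∀ z ∈ sphere (0:ℂ) rz, ∀ w ∈ closedBall ((α:ℂ)-1) rv, z - w ≠ 0 := by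
    intro z hz w hw h0
    have hz' : ‖z‖ = rz := by simpa using mem_sphere_iff_norm.mp hz
    have hb : ‖w - ((α:ℂ)-1)‖ ≤ rv := mem_closedBall_iff_norm.mp hw
    have hw1 : w = z := by linear_combination -h0
    rw [hw1] at hb
    have h1 := tri (-((α:ℂ)-1)) z
    rw [norm_neg, hca, show z + -((α:ℂ)-1) = z - ((α:ℂ)-1) by ring, hz'] at h1
    linarith
  have G8 : ∀ z ∈ sphere (0:ℂ) rz, ∀ w ∈ closedBall ((α:ℂ)-1) rv, z + w + 1 ≠ 0 := by
    intro z hz w hw h0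
    have hz' : ‖z‖ = rz := by simpa using mem_sphere_iff_norm.mp hz
    have hb : ‖w - ((α:ℂ)-1)‖ ≤ rv := mem_closedBall_iff_norm.mp hw
    have hw1 : w - ((α:ℂ)-1) = -(z + ((α:ℝ):ℂ)) := by push_cast; linear_combination h0
    rw [hw1, norm_neg] at hb
    have h1 := tri (((α:ℝ)):ℂ) z
    rw [Complex.norm_real, Real.norm_eq_abs, abs_of_pos hα0, hz'] at h1
    linarith
  have G9a : ∀ z ∈ sphere (0:ℂ) rz, z ≠ 0 := by
    intro z hz h0
    have hz' : ‖z‖ = rz := by simpa using mem_sphere_iff_norm.mp hz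
    rw [h0, norm_zero] at hz'
    linarith
  have G9b : ∀ z ∈ sphere (0:ℂ) rz, 1 + z ≠ 0 := by
    intro z hz h0
    have hz' : ‖z‖ = rz := by simpa using mem_sphere_iff_norm.mp hz
    have : z = -1 := by linear_combination h0
    rw [this] at hz'
    simp at hz'
    linarith
  have G9c : ∀ z ∈ sphere (0:ℂ) rz, z + 1 - (α:ℂ) ≠ 0 := by
    intro z hz h0
    have hz' : ‖z‖ = rz := by simpa using mem_sphere_iff_norm.mp hz
    have : z = ((α - 1 : ℝ):ℂ) := by push_cast; linear_combination h0
    rw [this, Complex.norm_real, Real.norm_eq_abs, abs_of_neg (by linarith : α - 1 < 0)] at hz'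
    linarith
  have G9d : ∀ z ∈ sphere (0:ℂ) rz, z + (α:ℂ) ≠ 0 := by
    intro z hz h0
    have hz' : ‖z‖ = rz := by simpa using mem_sphere_iff_norm.mp hz
    have : z = ((-α : ℝ):ℂ) := by push_cast; linear_combination h0
    rw [this, Complex.norm_real, Real.norm_eq_abs, abs_neg, abs_of_pos hα0] at hz'
    linarith
  have G11 : ∀ w ∈ closedBall ((α:ℂ)-1) r, w + (α:ℂ) ≠ 0 := by
    intro w hw h0
    have hb : ‖w - ((α:ℂ)-1)‖ ≤ r := mem_closedBall_iff_norm.mp hw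
    have hw1 : w - ((α:ℂ)-1) = ((1 - 2*α : ℝ):ℂ) := by push_cast; linear_combination h0
    rw [hw1, Complex.norm_real, Real.norm_eq_abs, abs_sub_comm 1 (2*α)] at hb
    linarith
  have Gsm1 : ∀ w : ℂ, ‖w‖ < ε → 1 + w ≠ 0 := by
    intro w hwε h0
    have : w = -1 := by linear_combination h0
    rw [this] at hwε
    simp at hwε
    linarith
  have Gsm2 : ∀ w : ℂ, ‖w‖ < ε → w + 1 - (α:ℂ) ≠ 0 := by
    intro w hwε h0
    have : w = ((α - 1 : ℝ):ℂ) := by push_cast; linear_combination h0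
    rw [this, Complex.norm_real, Real.norm_eq_abs, abs_of_neg (by linarith : α - 1 < 0)] at hwε
    linarith
  have Gsm3 : ∀ w : ℂ, ‖w‖ < ε → w + (α:ℂ) ≠ 0 := by
    intro w hwε h0
    have : w = ((-α : ℝ):ℂ) := by push_cast; linear_combination h0
    rw [this, Complex.norm_real, Real.norm_eq_abs, abs_neg, abs_of_pos hα0] at hwε
    linarith
  -- differentiability builders
  have hsingle_diff : ∀ w : ℂ, w ≠ 0 → 1 + w ≠ 0 → w + 1 - (α:ℂ) ≠ 0 → w + (α:ℂ) ≠ 0 →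
      DifferentiableAt ℂ (singleInt α n t x) w := by
    intro w h0 h1 h2 h3
    have d1 : DifferentiableAt ℂ (fun v : ℂ => (1+v)^(x+(n:ℤ)-1)) w :=
      DifferentiableAt.zpow (by fun_prop) (Or.inl h1)
    have d3 : DifferentiableAt ℂ (fun v : ℂ => v^(-((n:ℤ)-1))) w :=
      DifferentiableAt.zpow differentiableAt_id (Or.inl h0)
    unfold singleInt
    exact (((d1.mul (by fun_prop)).mul d3).mul (by fun_prop)).div (by fun_prop)
      (mul_ne_zero h2 h3)
  have hK_diff : ∀ w : ℂ, w ≠ 0 → 1 + w ≠ 0 → DifferentiableAt ℂ (Kfun α t n x) w := by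
    intro w h0 h1
    have h1' : w + 1 ≠ 0 := by rw [add_comm]; exact h1
    have d1 : DifferentiableAt ℂ (fun v : ℂ => (1+v)^(x+2*(n:ℤ)-2)) w :=
      DifferentiableAt.zpow (by fun_prop) (Or.inl h1)
    have d2 : DifferentiableAt ℂ (fun v : ℂ => (v*(1+v))^(-((n:ℤ)-1))) w :=
      DifferentiableAt.zpow (by fun_prop) (Or.inl (mul_ne_zero h0 h1))
    unfold Kfun
    exact ((((by fun_prop : DifferentiableAt ℂ (fun v : ℂ => 2*v+2-(α:ℂ)) w).mul d1).mul
      (by fun_prop)).mul d2).mul ((differentiableAt_id.add_const 1).inv h1')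
  have hL_diff : ∀ w : ℂ, w ≠ 0 → 1 + w ≠ 0 → w + (α:ℂ) ≠ 0 →
      DifferentiableAt ℂ (Lfun α t n x) w := by
    intro w h0 h1 h3
    have d1 : DifferentiableAt ℂ (fun v : ℂ => (1+v)^(x+(n:ℤ)-1)) w :=
      DifferentiableAt.zpow (by fun_prop) (Or.inl h1)
    have d3 : DifferentiableAt ℂ (fun v : ℂ => v^(-((n:ℤ)-1))) w :=
      DifferentiableAt.zpow differentiableAt_id (Or.inl h0)
    unfold Lfun
    exact (((d1.mul (by fun_prop)).mul d3).mul (by fun_prop)).mul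
      ((differentiableAt_id.add_const _).inv h3)
  have hH_diff : ∀ z w : ℂ, z - w ≠ 0 → z + w + 1 ≠ 0 → w + 1 ≠ 0 →
      DifferentiableAt ℂ (fun v => Hfun α t n x z v) w := by
    intro z w h0 h1 h2
    unfold Hfun
    refine DifferentiableAt.mul ?_ ((differentiableAt_id.add_const 1).inv h2)
    refine DifferentiableAt.mul ?_ (differentiableAt_const _)
    refine DifferentiableAt.mul ?_ (differentiableAt_const _)
    refine DifferentiableAt.mul ?_ (differentiableAt_const _)
    exact DifferentiableAt.div (by fun_prop) (by fun_prop) (mul_ne_zero h0 h1)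
  have hGz_diff : ∀ v w : ℂ, w ≠ 0 → 1 + w ≠ 0 → w + v + 1 ≠ 0 →
      DifferentiableAt ℂ (Gzfun α t n x v) w := by
    intro v w h0 h1 h2
    have d1 : DifferentiableAt ℂ (fun z : ℂ => (1+z)^(x+2*(n:ℤ)-2)) w :=
      DifferentiableAt.zpow (by fun_prop) (Or.inl h1)
    have d2 : DifferentiableAt ℂ (fun z : ℂ => (z*(1+z))^(-((n:ℤ)-1))) w :=
      DifferentiableAt.zpow (by fun_prop) (Or.inl (mul_ne_zero h0 h1))
    unfold Gzfun
    refine DifferentiableAt.mul ?_ (differentiableAt_const _)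
    refine DifferentiableAt.mul ?_ d2
    refine DifferentiableAt.mul ?_ (by fun_prop)
    refine DifferentiableAt.mul ?_ d1
    exact DifferentiableAt.div (by fun_prop) (by fun_prop) h2
  -- continuity of phiInt on the product of spheres
  have hphicont : ContinuousOn (fun p : ℂ × ℂ => phiInt α n t x p.1 p.2)
      (sphere ((α:ℂ)-1) rv ×ˢ sphere (0:ℂ) rz) := by
    intro p hp
    have hp1 : p.1 ∈ sphere ((α:ℂ)-1) rv := hp.1
    have hp2 : p.2 ∈ sphere (0:ℂ) rz := hp.2
    have hzv : p.2 - p.1 ≠ 0 := G7 p.2 hp2 p.1 (sphere_subset_closedBall hp1)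
    have hzv1 : p.2 + p.1 + 1 ≠ 0 := G8 p.2 hp2 p.1 (sphere_subset_closedBall hp1)
    have hz0 : p.2 ≠ 0 := G9a p.2 hp2
    have hz1 : 1 + p.2 ≠ 0 := G9b p.2 hp2
    have hv1 : p.1 + 1 ≠ 0 := by
      rw [add_comm]; exact G2 rv hrvε p.1 (sphere_subset_closedBall hp1)
    have hvc : p.1 + 1 - (α:ℂ) ≠ 0 := by
      have h := mem_sphere_iff_norm.mp hp1
      intro h0
      have : p.1 - ((α:ℂ)-1) = 0 := by linear_combination h0
      rw [this, norm_zero] at h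
      linarith
    refine ContinuousAt.continuousWithinAt ?_
    unfold phiInt
    refine ContinuousAt.mul (ContinuousAt.mul (ContinuousAt.mul (ContinuousAt.mul
      (ContinuousAt.div (by fun_prop) (by fun_prop) (mul_ne_zero hzv hzv1))
      (ContinuousAt.zpow₀ (by fun_prop) _ (Or.inl hz1))) (by fun_prop))
      (ContinuousAt.zpow₀ (by fun_prop) _ (Or.inl (mul_ne_zero hz0 hz1)))) ?_
    exact ContinuousAt.inv₀ (by fun_prop) (mul_ne_zero hv1 hvc)
  -- Fubini
  have hswap := circleIntegral_swap (fun v z => phiInt α n t x v z) ((α:ℂ)-1) 0 rv rz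
    hrv0.le hrz0.le hphicont
  -- continuity of the inner integral as a function of the outer parameter
  have hΦc : Continuous fun θ : ℝ =>
      (∮ z in C((0:ℂ), rz), phiInt α n t x (circleMap ((α:ℂ)-1) rv θ) z) :=
    circleIntegral_param_cont (fun v z => phiInt α n t x v z) ((α:ℂ)-1) 0 rv rz
      hrv0.le hrz0.le hphicont
  have hΦint : CircleIntegrable (fun v => (2*(π:ℂ)*I)⁻¹ * ∮ z in C((0:ℂ), rz), phiInt α n t x v z)
      ((α:ℂ)-1) rv := (continuous_const.mul hΦc).intervalIntegrable _ _
  have hFs_int : CircleIntegrable (Ffun α t n x) ((α:ℂ)-1) rv := by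
    refine ContinuousOn.circleIntegrable hrv0.le ?_
    intro v hv
    have hv0 : v ≠ 0 := G1 rv hrvε v (sphere_subset_closedBall hv)
    have hv1 : 1 + v ≠ 0 := G2 rv hrvε v (sphere_subset_closedBall hv)
    have hv1' : v + 1 ≠ 0 := by rw [add_comm]; exact hv1
    have hvc : v - ((α:ℂ)-1) ≠ 0 := by
      intro h0
      have h := mem_sphere_iff_norm.mp hv
      rw [h0, norm_zero] at h
      linarith
    refine ContinuousAt.continuousWithinAt ?_
    unfold Ffun Kfun
    refine ContinuousAt.mul (ContinuousAt.inv₀ (by fun_prop) hvc) ?_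
    refine ContinuousAt.mul (ContinuousAt.mul (ContinuousAt.mul (ContinuousAt.mul (by fun_prop)
      (ContinuousAt.zpow₀ (by fun_prop) _ (Or.inl hv1))) (by fun_prop))
      (ContinuousAt.zpow₀ (by fun_prop) _ (Or.inl (mul_ne_zero hv0 hv1)))) ?_
    exact ContinuousAt.inv₀ (by fun_prop) hv1'
  -- inner Cauchy: the z-integral around v
  have hinner : ∀ v ∈ sphere ((α:ℂ)-1) rv,
      (∮ z in C(v, rz), phiInt α n t x v z) = (2*(π:ℂ)*I) * Ffun α t n x v := by
    intro v hv
    have h2v : v + v + 1 ≠ 0 := G6 v hv v (mem_closedBall_self hrz0.le)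
    have hGd : DifferentiableOn ℂ (Gzfun α t n x v) (closedBall v rz) := fun w hw =>
      (hGz_diff v w (G4 v hv w hw) (G5 v hv w hw) (G6 v hv w hw)).differentiableWithinAt
    rw [cauchy_pole hrz0 (mem_ball_self hrz0) (fun u _ => phi_eq_pole_z α n t x v u) hGd,
      Gz_diag α n t x h2v]
  -- outer Cauchy for each z on the small circle around 0
  have houter : ∀ z ∈ sphere (0:ℂ) rz,
      (∮ v in C((α:ℂ)-1, rv), phiInt α n t x v z) = (2*(π:ℂ)*I) * singleInt α n t x z := by
    intro z hz
    have hHd : DifferentiableOn ℂ (fun v => Hfun α t n x z v) (closedBall ((α:ℂ)-1) rv) :=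
      fun w hw => (hH_diff z w (G7 z hz w hw) (G8 z hz w hw)
        (by rw [add_comm]; exact G2 rv hrvε w hw)).differentiableWithinAt
    rw [cauchy_pole hrv0 (mem_ball_self hrv0) (fun u _ => phi_eq_pole_v α n t x u z) hHd,
      Hc_eq α t n x ha0 (G9a z hz) (G9b z hz) (G9c z hz) (G9d z hz)]
  have hstep4 : (∮ v in C((α:ℂ)-1, rv), ∮ z in C((0:ℂ), rz), phiInt α n t x v z)
      = (2*(π:ℂ)*I) * ∮ z in C((0:ℂ), rz), singleInt α n t x z := by
    rw [hswap, circleIntegral.integral_congr hrz0.le (fun z hz => houter z hz)]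
    exact circleIntegral.integral_const_mul _ _ _ _
  have hstep5 : (∮ v in C((α:ℂ)-1, rv), Ffun α t n x v) = (2*(π:ℂ)*I) * Rval α t n x := by
    have hKd : DifferentiableOn ℂ (Kfun α t n x) (closedBall ((α:ℂ)-1) rv) := fun w hw =>
      (hK_diff w (G1 rv hrvε w hw) (G2 rv hrvε w hw)).differentiableWithinAt
    rw [cauchy_pole (G := Ffun α t n x) hrv0 (mem_ball_self hrv0) (fun u _ => rfl) hKd,
      Kc_eq α t n x ha0 ha1]
  have hRHS2 : (∮ v in C((α:ℂ)-1, r), singleInt α n t x v) = (2*(π:ℂ)*I) * Rval α t n x := by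
    have hLd : DifferentiableOn ℂ (Lfun α t n x) (closedBall ((α:ℂ)-1) r) := fun w hw =>
      (hL_diff w (G1 r hrε w hw) (G2 r hrε w hw) (G11 w hw)).differentiableWithinAt
    rw [cauchy_pole hr0 (mem_ball_self hr0) (fun u _ => singleInt_eq_pole α n t x u) hLd,
      Lc_eq α t n x ha2]
  -- annulus deformation
  have hannulus : (∮ z in C((0:ℂ), rz), singleInt α n t x z)
      = ∮ z in C((0:ℂ), r), singleInt α n t x z := by
    have main : ∀ s R : ℝ, 0 < s → s ≤ R → R < ε →
        (∮ z in C((0:ℂ), R), singleInt α n t x z) = ∮ z in C((0:ℂ), s), singleInt α n t x z := by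
      intro s R h1 h2 h3
      have hd : ∀ w ∈ closedBall (0:ℂ) R \ ball (0:ℂ) s,
          DifferentiableAt ℂ (singleInt α n t x) w := by
        intro w hw
        have hw1 : ‖w‖ ≤ R := by simpa using mem_closedBall_iff_norm.mp hw.1
        have hw2 : s ≤ ‖w‖ := not_lt.mp (fun hlt => hw.2 (mem_ball_zero_iff.mpr hlt))
        have h0 : w ≠ 0 := by
          intro h; rw [h, norm_zero] at hw2; linarith
        have hwε : ‖w‖ < ε := lt_of_le_of_lt hw1 h3
        exact hsingle_diff w h0 (Gsm1 w hwε) (Gsm2 w hwε) (Gsm3 w hwε)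
      refine circleIntegral_eq_of_differentiable_on_annulus_off_countable h1 h2
        Set.countable_empty ?_ ?_
      · exact fun w hw => (hd w hw).continuousAt.continuousWithinAt
      · intro w hw
        exact hd w ⟨ball_subset_closedBall hw.1.1, fun h => hw.1.2 (ball_subset_closedBall h)⟩
    rcases le_total rz r with h | h
    · exact (main rz r hrz0 h hrε).symm
    · exact main r rz hr0 h hrzε
  -- assemble
  have e1 : (∮ v in C((α:ℂ)-1, rv), (2*(π:ℂ)*I)⁻¹ *
        ((∮ z in C((0:ℂ), rz), phiInt α n t x v z) + ∮ z in C(v, rz), phiInt α n t x v z))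
      = ∮ v in C((α:ℂ)-1, rv), ((2*(π:ℂ)*I)⁻¹ * (∮ z in C((0:ℂ), rz), phiInt α n t x v z)
          + Ffun α t n x v) := by
    refine circleIntegral.integral_congr hrv0.le (fun v hv => ?_)
    rw [hinner v hv, mul_add, inv_mul_cancel_left₀ h2pi]
  rw [e1, circleIntegral_add' hΦint hFs_int, circleIntegral.integral_const_mul, hstep4,
    hannulus, hstep5, hRHS2, inv_mul_cancel_left₀ h2pi]
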